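/- arXiv:1611.00146 — 2 statements merged into one kernel-verified Lean document; each statement's English description precedes it below -/
import Mathlib

section
/- Fix positive integers M, N, R, V ∈ ℝ^{M×N}, and W ∈ ℝ^{M×R} with W ≠ O. For all H₁, H₂ ∈ ℝ^{R×N}, (H₁ − H₂)•(Wᵀ(WH₁ − V) − Wᵀ(WH₂ − V)) ≥ (1/‖WᵀW‖_F)·‖Wᵀ(WH₁ − V) − Wᵀ(WH₂ − V)‖_F²; that is, the gradient map H ↦ Wᵀ(WH − V) is inverse-strongly monotone with constant 1/‖WᵀW‖_F. -/
open Matrix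

/-- Frobenius norm of a real matrix. -/
noncomputable def frob {m n : Type*} [Fintype m] [Fintype n] (X : Matrix m n ℝ) : ℝ :=
  Real.sqrt (∑ i, ∑ j, (X i j) ^ 2)

/-- Frobenius inner product of two real matrices. -/
noncomputable def fip {m n : Type*} [Fintype m] [Fintype n] (X Y : Matrix m n ℝ) : ℝ :=
  ∑ i, ∑ j, X i j * Y i j

attribute [local instance] Matrix.frobeniusSeminormedAddCommGroup

lemma frob_eq_norm {m n : Type*} [Fintype m] [Fintype n] (X : Matrix m n ℝ) :
    frob X = ‖X‖ := by
  rw [Matrix.frobenius_norm_def, frob, Real.sqrt_eq_rpow]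
  congr 1
  refine Finset.sum_congr rfl fun i _ => Finset.sum_congr rfl fun j _ => ?_
  rw [Real.norm_eq_abs, Real.rpow_two, sq_abs]

lemma frob_nonneg {m n : Type*} [Fintype m] [Fintype n] (X : Matrix m n ℝ) :
    0 ≤ frob X := Real.sqrt_nonneg _

lemma frob_mul_le {l m n : Type*} [Fintype l] [Fintype m] [Fintype n]
    (X : Matrix l m ℝ) (Y : Matrix m n ℝ) : frob (X * Y) ≤ frob X * frob Y := by
  simp only [frob_eq_norm]
  exact Matrix.frobenius_norm_mul X Y

lemma fip_eq_trace {m n : Type*} [Fintype m] [Fintype n] (X Y : Matrix m n ℝ) :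
    fip X Y = (Xᵀ * Y).trace := by
  simp only [fip, Matrix.trace, Matrix.diag, Matrix.mul_apply, Matrix.transpose_apply]
  exact Finset.sum_comm

lemma frob_sq {m n : Type*} [Fintype m] [Fintype n] (X : Matrix m n ℝ) :
    frob X ^ 2 = fip X X := by
  rw [frob, Real.sq_sqrt]
  · simp [fip, sq]
  · positivity

lemma frob_transpose {m n : Type*} [Fintype m] [Fintype n] (X : Matrix m n ℝ) :
    frob Xᵀ = frob X := by
  rw [frob, frob]
  congr 1
  exact Finset.sum_comm

lemma fip_le_frob_mul_frob {m n : Type*} [Fintype m] [Fintype n] (X Y : Matrix m n ℝ) :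
    fip X Y ≤ frob X * frob Y := by
  have h : fip X Y ^ 2 ≤ (∑ i, ∑ j, X i j ^ 2) * (∑ i, ∑ j, Y i j ^ 2) := by
    rw [fip]
    have := Finset.sum_mul_sq_le_sq_mul_sq (Finset.univ : Finset (m × n))
      (fun p => X p.1 p.2) (fun p => Y p.1 p.2)
    simpa [Fintype.sum_prod_type] using this
  calc fip X Y ≤ |fip X Y| := le_abs_self _
    _ = Real.sqrt (fip X Y ^ 2) := (Real.sqrt_sq_eq_abs _).symm
    _ ≤ Real.sqrt ((∑ i, ∑ j, X i j ^ 2) * (∑ i, ∑ j, Y i j ^ 2)) := Real.sqrt_le_sqrt h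
    _ = frob X * frob Y := by
        rw [frob, frob, Real.sqrt_mul (by positivity)]

lemma eq_zero_of_sumsq_eq_zero {m n : Type*} [Fintype m] [Fintype n] (X : Matrix m n ℝ)
    (hsum : (∑ i, ∑ j, (X i j) ^ 2) = 0) : X = 0 := by
  ext i j
  have h1 : ∀ i ∈ Finset.univ, (∑ j, (X i j) ^ 2) = 0 :=
    (Finset.sum_eq_zero_iff_of_nonneg (fun i _ => by positivity)).mp hsum
  have h2 := (Finset.sum_eq_zero_iff_of_nonneg (fun j _ => by positivity)).mp
    (h1 i (Finset.mem_univ i)) j (Finset.mem_univ j)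
  simpa using (pow_eq_zero_iff two_ne_zero).mp h2

lemma frob_pos_of_ne_zero {m n : Type*} [Fintype m] [Fintype n]
    (X : Matrix m n ℝ) (hX : X ≠ 0) : 0 < frob X := by
  rcases (frob_nonneg X).lt_or_eq with h | h
  · exact h
  · exfalso
    apply hX
    apply eq_zero_of_sumsq_eq_zero
    have h0 : 0 ≤ ∑ i, ∑ j, (X i j) ^ 2 := by positivity
    have hle := Real.sqrt_eq_zero'.mp h.symm
    linarith

lemma fip_grad (m r n : Type*) [Fintype m] [Fintype r] [Fintype n]
    (D : Matrix r n ℝ) (W : Matrix m r ℝ) :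
    fip D (Wᵀ * (W * D)) = frob (W * D) ^ 2 := by
  rw [fip_eq_trace, frob_sq, fip_eq_trace, Matrix.transpose_mul, Matrix.mul_assoc]

lemma frob_sq_WtU (m r n : Type*) [Fintype m] [Fintype r] [Fintype n]
    (W : Matrix m r ℝ) (U : Matrix m n ℝ) :
    frob (Wᵀ * U) ^ 2 = fip (U * Uᵀ) (W * Wᵀ) := by
  rw [frob_sq, fip_eq_trace, fip_eq_trace, Matrix.transpose_mul, Matrix.transpose_mul,
    Matrix.transpose_transpose, Matrix.transpose_transpose]
  rw [Matrix.trace_mul_comm (Uᵀ * W) (Wᵀ * U)]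
  simp only [Matrix.mul_assoc]
  rw [Matrix.trace_mul_comm Wᵀ (U * (Uᵀ * W))]
  simp only [Matrix.mul_assoc]

lemma frob_WWt (m r : Type*) [Fintype m] [Fintype r] (W : Matrix m r ℝ) :
    frob (W * Wᵀ) = frob (Wᵀ * W) := by
  have h1 : frob (W * Wᵀ) ^ 2 = frob (Wᵀ * W) ^ 2 := by
    rw [frob_sq, frob_sq, fip_eq_trace, fip_eq_trace, Matrix.transpose_mul,
      Matrix.transpose_transpose, Matrix.transpose_mul, Matrix.transpose_transpose]
    simp only [Matrix.mul_assoc]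
    rw [Matrix.trace_mul_comm W (Wᵀ * (W * Wᵀ))]
    simp only [Matrix.mul_assoc]
  have h2 := congrArg Real.sqrt h1
  rwa [Real.sqrt_sq (frob_nonneg _), Real.sqrt_sq (frob_nonneg _)] at h2

theorem stmt_3 (M N R : ℕ) (hM : 0 < M) (hN : 0 < N) (hR : 0 < R)
    (V : Matrix (Fin M) (Fin N) ℝ) (W : Matrix (Fin M) (Fin R) ℝ) (hW : W ≠ 0)
    (H₁ H₂ : Matrix (Fin R) (Fin N) ℝ) :
    fip (H₁ - H₂) (Wᵀ * (W * H₁ - V) - Wᵀ * (W * H₂ - V)) ≥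
      (1 / frob (Wᵀ * W)) * frob (Wᵀ * (W * H₁ - V) - Wᵀ * (W * H₂ - V)) ^ 2 := by
  have hkey : Wᵀ * (W * H₁ - V) - Wᵀ * (W * H₂ - V) = Wᵀ * (W * (H₁ - H₂)) := by
    rw [Matrix.mul_sub W, ← Matrix.mul_sub Wᵀ]
    congr 1
    abel
  rw [hkey]
  set D : Matrix (Fin R) (Fin N) ℝ := H₁ - H₂
  set U : Matrix (Fin M) (Fin N) ℝ := W * D with hU
  -- W ≠ 0 implies Wᵀ * W ≠ 0
  have hWW : Wᵀ * W ≠ 0 := by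
    intro h
    apply hW
    have h1 : fip W W = 0 := by rw [fip_eq_trace, h, Matrix.trace_zero]
    apply eq_zero_of_sumsq_eq_zero
    rw [← h1]; simp [fip, sq]
  have hc : 0 < frob (Wᵀ * W) := frob_pos_of_ne_zero _ hWW
  have hLHS : fip D (Wᵀ * U) = frob U ^ 2 := by
    rw [hU]; exact fip_grad _ _ _ D W
  -- key bound : frob (Wᵀ * U) ^ 2 ≤ frob (Wᵀ * W) * frob U ^ 2
  have hbound : frob (Wᵀ * U) ^ 2 ≤ frob (Wᵀ * W) * frob U ^ 2 := by
    have e2 : fip (U * Uᵀ) (W * Wᵀ) ≤ frob (U * Uᵀ) * frob (W * Wᵀ) :=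
      fip_le_frob_mul_frob _ _
    have e3 : frob (U * Uᵀ) ≤ frob U * frob Uᵀ := frob_mul_le _ _
    rw [frob_transpose] at e3
    rw [frob_sq_WtU]
    calc fip (U * Uᵀ) (W * Wᵀ) ≤ frob (U * Uᵀ) * frob (W * Wᵀ) := e2
      _ ≤ (frob U * frob U) * frob (W * Wᵀ) :=
          mul_le_mul_of_nonneg_right e3 (frob_nonneg _)
      _ = frob (Wᵀ * W) * frob U ^ 2 := by rw [frob_WWt]; ring
  rw [hLHS, ge_iff_le, div_mul_eq_mul_div, one_mul, div_le_iff₀ hc]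
  linarith [hbound]
end

section
/- (Key projection inequality for the H-iterates.) Under the algorithm setup, for every n ∈ ℕ with W_n ≠ O and every entrywise-nonnegative H ∈ ℝ^{R×N}: ‖H_{n+1} − H‖_F² ≤ ‖H_n − H‖_F² + 2 μ_n (1 − α_n) (H − T_n(H_n)) • (W_nᵀ(W_n H_n − V)). -/
open Matrix Filter

/-- Entrywise projection onto the nonnegative orthant. -/
def pplus {m n : Type*} (X : Matrix m n ℝ) : Matrix m n ℝ :=
  Matrix.of fun i j => max (X i j) 0

/-- Entrywise nonnegativity of a matrix. -/
def matNonneg {m n : Type*} (X : Matrix m n ℝ) : Prop := ∀ i j, 0 ≤ X i j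


lemma entry_ineq (h c g mu a : ℝ) (hc : 0 ≤ c) (ha0 : 0 ≤ a) (ha1 : a ≤ 1) :
    (a * h + (1 - a) * max (h - mu * g) 0 - c) ^ 2 ≤
      (h - c) ^ 2 + 2 * mu * (1 - a) * ((c - max (h - mu * g) 0) * g) := by
  set t := max (h - mu * g) 0 with ht
  have hproj : (h - mu * g - t) * (c - t) ≤ 0 := by
    rcases le_or_gt 0 (h - mu * g) with h1 | h1
    · simp [ht, max_eq_left h1]
    · have h2 : t = 0 := max_eq_right h1.le
      rw [h2]
      nlinarith
  nlinarith [sq_nonneg (h - t), mul_nonneg (sub_nonneg.2 ha1) (sq_nonneg (h - t)),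
    mul_nonneg (mul_nonneg ha0 (sub_nonneg.2 ha1)) (sq_nonneg (h - t)),
    mul_nonneg (sub_nonneg.2 ha1) (neg_nonneg.2 hproj)]

theorem stmt_15
    (M N R : ℕ) (hM : 0 < M) (hN : 0 < N) (hR : 0 < R)
    (V : Matrix (Fin M) (Fin N) ℝ)
    (W : ℕ → Matrix (Fin M) (Fin R) ℝ) (H : ℕ → Matrix (Fin R) (Fin N) ℝ)
    (α β μ lam : ℕ → ℝ)
    (T : ℕ → Matrix (Fin R) (Fin N) ℝ → Matrix (Fin R) (Fin N) ℝ)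
    (S : ℕ → Matrix (Fin M) (Fin R) ℝ → Matrix (Fin M) (Fin R) ℝ)
    (hW0 : matNonneg (W 0)) (hH0 : matNonneg (H 0))
    (hα : ∀ n, α n ∈ Set.Icc (0:ℝ) 1) (hβ : ∀ n, β n ∈ Set.Icc (0:ℝ) 1)
    (hμ : ∀ n, W n ≠ 0 → 0 < μ n ∧ μ n ≤ 2 / frob ((W n)ᵀ * W n))
    (hT : ∀ n, W n ≠ 0 → ∀ X, T n X = pplus (X - μ n • ((W n)ᵀ * (W n * X - V))))
    (hT0 : ∀ n, W n = 0 → ∀ X, T n X = X)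
    (hHrec : ∀ n, H (n + 1) = α n • H n + (1 - α n) • T n (H n))
    (hlam : ∀ n, H (n + 1) ≠ 0 → 0 < lam n ∧ lam n ≤ 2 / frob ((H (n + 1))ᵀ * H (n + 1)))
    (hS : ∀ n, H (n + 1) ≠ 0 → ∀ X, S n X = pplus (X - lam n • ((X * H (n + 1) - V) * (H (n + 1))ᵀ)))
    (hS0 : ∀ n, H (n + 1) = 0 → ∀ X, S n X = X)
    (hWrec : ∀ n, W (n + 1) = β n • W n + (1 - β n) • S n (W n))
    :
    ∀ n : ℕ, W n ≠ 0 →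
      ∀ Hc : Matrix (Fin R) (Fin N) ℝ, matNonneg Hc →
        frob (H (n + 1) - Hc) ^ 2 ≤
          frob (H n - Hc) ^ 2 +
            2 * μ n * (1 - α n) * fip (Hc - T n (H n)) ((W n)ᵀ * (W n * H n - V)) := by
  intro n hWn Hc hHc
  have hTn := hT n hWn (H n)
  set G := (W n)ᵀ * (W n * H n - V) with hG
  have hTentry : ∀ i j, T n (H n) i j = max (H n i j - μ n * G i j) 0 := by
    intro i j
    rw [hTn]
    simp [pplus, Matrix.sub_apply, Matrix.smul_apply, smul_eq_mul]
  have hHentry : ∀ i j, H (n + 1) i j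
      = α n * H n i j + (1 - α n) * max (H n i j - μ n * G i j) 0 := by
    intro i j
    rw [hHrec n]
    simp [Matrix.add_apply, Matrix.smul_apply, smul_eq_mul, hTentry i j]
  have hfrob : ∀ (X : Matrix (Fin R) (Fin N) ℝ), frob X ^ 2 = ∑ i, ∑ j, X i j ^ 2 := by
    intro X
    rw [frob, Real.sq_sqrt]
    positivity
  rw [hfrob, hfrob, fip]
  have hmulsum : 2 * μ n * (1 - α n) * ∑ i, ∑ j, (Hc - T n (H n)) i j * G i j
      = ∑ i, ∑ j, 2 * μ n * (1 - α n) * ((Hc - T n (H n)) i j * G i j) := by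
    rw [Finset.mul_sum]
    exact Finset.sum_congr rfl fun i _ => by rw [Finset.mul_sum]
  rw [hmulsum, ← Finset.sum_add_distrib]
  refine Finset.sum_le_sum fun i _ => ?_
  rw [← Finset.sum_add_distrib]
  refine Finset.sum_le_sum fun j _ => ?_
  simp only [Matrix.sub_apply, hHentry i j, hTentry i j]
  exact entry_ineq (H n i j) (Hc i j) (G i j) (μ n) (α n) (hHc i j) (hα n).1 (hα n).2
end
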